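/- The Shapley value satisfies the symmetry axiom: if players i and j satisfy ξ(ω ∪ {i}) = ξ(ω ∪ {j}) for all coalitions ω ⊆ Ω \ {i, j}, then their Shapley values are equal. -/

import Mathlib

open Finset

/-- Combination-form Shapley value of player `i` with player set all of `α`. -/
noncomputable def shapley {α : Type*} [Fintype α] [DecidableEq α]
    (ξ : Finset α → ℝ) (i : α) : ℝ :=
  (Fintype.card α : ℝ)⁻¹ *
    ∑ ω ∈ (Finset.univ.erase i).powerset,
      ((Fintype.card α - 1).choose ω.card : ℝ)⁻¹ * (ξ (insert i ω) - ξ ω)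

/-- Symmetry axiom of the Shapley value. -/
theorem shapley_symmetry {α : Type*} [Fintype α] [DecidableEq α]
    (ξ : Finset α → ℝ) (i j : α) (hij : i ≠ j)
    (h : ∀ ω ∈ ((Finset.univ.erase i).erase j).powerset,
      ξ (insert i ω) = ξ (insert j ω)) :
    shapley ξ i = shapley ξ j := by
  have h' : ∀ ω : Finset α, i ∉ ω → j ∉ ω → ξ (insert i ω) = ξ (insert j ω) := by
    intro ω hi hj
    apply h
    simp [Finset.mem_powerset, Finset.subset_erase, hi, hj]
  unfold shapley
  congr 1
  refine Finset.sum_bij' (fun ω _ => if j ∈ ω then insert i (ω.erase j) else ω)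
    (fun ω _ => if i ∈ ω then insert j (ω.erase i) else ω)
    ?hi ?hj ?li ?ri ?hval
  case hi =>
    intro ω hω
    simp only [Finset.mem_powerset, Finset.subset_erase, Finset.subset_univ, true_and] at hω ⊢
    split <;> simp_all [hij.symm]
  case hj =>
    intro ω hω
    simp only [Finset.mem_powerset, Finset.subset_erase, Finset.subset_univ, true_and] at hω ⊢
    split <;> simp_all [hij]
  case li =>
    intro ω hω
    simp only [Finset.mem_powerset, Finset.subset_erase, Finset.subset_univ, true_and] at hω
    by_cases hjω : j ∈ ω
    · have h1 : i ∈ insert i (ω.erase j) := Finset.mem_insert_self _ _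
      simp only [if_pos hjω, if_pos h1]
      rw [Finset.erase_insert (by simp [hω, hij])]
      rw [Finset.insert_erase hjω]
    · simp [hjω, hω]
  case ri =>
    intro ω hω
    simp only [Finset.mem_powerset, Finset.subset_erase, Finset.subset_univ, true_and] at hω
    by_cases hiω : i ∈ ω
    · have h1 : j ∈ insert j (ω.erase i) := Finset.mem_insert_self _ _
      simp only [if_pos hiω, if_pos h1]
      rw [Finset.erase_insert (by simp [hω, hij.symm])]
      rw [Finset.insert_erase hiω]
    · simp [hiω, hω]
  case hval =>
    intro ω hω
    simp only [Finset.mem_powerset, Finset.subset_erase, Finset.subset_univ, true_and] at hω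
    by_cases hjω : j ∈ ω
    · have hi' : i ∉ ω.erase j := fun hc => hω (Finset.mem_of_mem_erase hc)
      have hcard : (insert i (ω.erase j)).card = ω.card := by
        rw [Finset.card_insert_of_notMem hi', Finset.card_erase_of_mem hjω]
        have := Finset.card_pos.2 ⟨j, hjω⟩
        omega
      simp only [if_pos hjω, hcard]
      congr 2
      · rw [Finset.insert_comm, Finset.insert_erase hjω]
      · rw [h' (ω.erase j) hi' (Finset.notMem_erase _ _), Finset.insert_erase hjω]
    · simp only [if_neg hjω]
      rw [h' ω hω hjω]
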